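/- The generalized Petersen graph P(9,2) has exactly three Hamilton cycles (where two Hamilton cycles are counted as the same if they have the same edge set). -/

import Mathlib

/-- The generalized Petersen graph `P(9,2)`: vertices `a_0, …, a_8` (the left summand)
and `b_0, …, b_8` (the right summand), with edges `a_i a_{i+1}`, `b_i b_{i+1}` and
`a_i b_{2i}`, indices mod 9. -/
def petersen92 : SimpleGraph (Fin 9 ⊕ Fin 9) :=
  SimpleGraph.fromRel (fun x y =>
    match x, y with
    | Sum.inl i, Sum.inl j => j = i + 1
    | Sum.inr i, Sum.inr j => j = i + 1
    | Sum.inl i, Sum.inr j => j = 2 * i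
    | _, _ => False)

open SimpleGraph

abbrev Vp := Fin 9 ⊕ Fin 9

def pR : Vp → Vp → Prop := fun x y =>
  match x, y with
  | Sum.inl i, Sum.inl j => j = i + 1
  | Sum.inr i, Sum.inr j => j = i + 1
  | Sum.inl i, Sum.inr j => j = 2 * i
  | _, _ => False

instance pRdec : ∀ x y : Vp, Decidable (pR x y)
  | Sum.inl i, Sum.inl j => inferInstanceAs (Decidable (j = i + 1))
  | Sum.inr i, Sum.inr j => inferInstanceAs (Decidable (j = i + 1))
  | Sum.inl i, Sum.inr j => inferInstanceAs (Decidable (j = 2 * i))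
  | Sum.inr _, Sum.inl _ => inferInstanceAs (Decidable False)

instance : DecidableRel petersen92.Adj := fun x y =>
  decidable_of_iff (x ≠ y ∧ (pR x y ∨ pR y x)) (by rw [petersen92]; exact Iff.rfl)

/-- encoding of vertices as naturals 0..17 -/
def eN : Vp → Nat
  | Sum.inl i => i.val
  | Sum.inr i => 9 + i.val

def nbrsN : Nat → List Nat
  | 0 => [1, 8, 9] | 1 => [2, 0, 11] | 2 => [3, 1, 13] | 3 => [4, 2, 15]
  | 4 => [5, 3, 17] | 5 => [6, 4, 10] | 6 => [7, 5, 12] | 7 => [8, 6, 14]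
  | 8 => [0, 7, 16]
  | 9 => [10, 17, 0] | 10 => [11, 9, 5] | 11 => [12, 10, 1] | 12 => [13, 11, 6]
  | 13 => [14, 12, 2] | 14 => [15, 13, 7] | 15 => [16, 14, 3] | 16 => [17, 15, 8]
  | 17 => [9, 16, 4]
  | _ => []

def stepN (l : List Nat) : List (List Nat) :=
  match l with
  | [] => []
  | u :: _ => ((nbrsN u).filter
      (fun w => !(l.contains w) || (w == 0 && l.length == 18))).map (fun w => w :: l)

def expandN : ℕ → List (List Nat) → List (List Nat)
  | 0, ls => ls
  | n+1, ls => expandN n (ls.flatMap stepN)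

def s1 : List Vp := [Sum.inl 0, Sum.inr 0, Sum.inr 8, Sum.inr 7, Sum.inl 8, Sum.inl 7, Sum.inl 6, Sum.inr 3, Sum.inr 2, Sum.inr 1, Sum.inl 5, Sum.inl 4, Sum.inl 3, Sum.inr 6, Sum.inr 5, Sum.inr 4, Sum.inl 2, Sum.inl 1, Sum.inl 0]

def s2 : List Vp := [Sum.inl 0, Sum.inl 8, Sum.inr 7, Sum.inr 6, Sum.inr 5, Sum.inl 7, Sum.inl 6, Sum.inl 5, Sum.inr 1, Sum.inr 0, Sum.inr 8, Sum.inl 4, Sum.inl 3, Sum.inl 2, Sum.inr 4, Sum.inr 3, Sum.inr 2, Sum.inl 1, Sum.inl 0]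

def s3 : List Vp := [Sum.inl 0, Sum.inr 0, Sum.inr 1, Sum.inr 2, Sum.inl 1, Sum.inl 2, Sum.inl 3, Sum.inr 6, Sum.inr 7, Sum.inr 8, Sum.inl 4, Sum.inl 5, Sum.inl 6, Sum.inr 3, Sum.inr 4, Sum.inr 5, Sum.inl 7, Sum.inl 8, Sum.inl 0]

def W1 : petersen92.Walk (Sum.inl 0) (Sum.inl 0) :=
  Walk.cons (v := Sum.inr 0) (by decide) (Walk.cons (v := Sum.inr 8) (by decide) (Walk.cons (v := Sum.inr 7) (by decide) (Walk.cons (v := Sum.inl 8) (by decide) (Walk.cons (v := Sum.inl 7) (by decide) (Walk.cons (v := Sum.inl 6) (by decide) (Walk.cons (v := Sum.inr 3) (by decide) (Walk.cons (v := Sum.inr 2) (by decide) (Walk.cons (v := Sum.inr 1) (by decide) (Walk.cons (v := Sum.inl 5) (by decide) (Walk.cons (v := Sum.inl 4) (by decide) (Walk.cons (v := Sum.inl 3) (by decide) (Walk.cons (v := Sum.inr 6) (by decide) (Walk.cons (v := Sum.inr 5) (by decide) (Walk.cons (v := Sum.inr 4) (by decide) (Walk.cons (v := Sum.inl 2) (by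 decide) (Walk.cons (v := Sum.inl 1) (by decide) (Walk.cons (v := Sum.inl 0) (by decide) (Walk.nil))))))))))))))))))

def W2 : petersen92.Walk (Sum.inl 0) (Sum.inl 0) :=
  Walk.cons (v := Sum.inl 8) (by decide) (Walk.cons (v := Sum.inr 7) (by decide) (Walk.cons (v := Sum.inr 6) (by decide) (Walk.cons (v := Sum.inr 5) (by decide) (Walk.cons (v := Sum.inl 7) (by decide) (Walk.cons (v := Sum.inl 6) (by decide) (Walk.cons (v := Sum.inl 5) (by decide) (Walk.cons (v := Sum.inr 1) (by decide) (Walk.cons (v := Sum.inr 0) (by decide) (Walk.cons (v := Sum.inr 8) (by decide) (Walk.cons (v := Sum.inl 4) (by decide) (Walk.cons (v := Sum.inl 3) (by decide) (Walk.cons (v := Sum.inl 2) (by decide) (Walk.cons (v := Sum.inr 4) (by decide) (Walk.cons (v := Sum.inr 3) (by decide) (Walk.cons (v := Sum.inr 2) (by decide) (Walk.cons (v := Sum.inl 1) (by decide) (Walk.cons (v := Sum.inl 0) (by decide) (Walk.nil))))))))))))))))))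

def W3 : petersen92.Walk (Sum.inl 0) (Sum.inl 0) :=
  Walk.cons (v := Sum.inr 0) (by decide) (Walk.cons (v := Sum.inr 1) (by decide) (Walk.cons (v := Sum.inr 2) (by decide) (Walk.cons (v := Sum.inl 1) (by decide) (Walk.cons (v := Sum.inl 2) (by decide) (Walk.cons (v := Sum.inl 3) (by decide) (Walk.cons (v := Sum.inr 6) (by decide) (Walk.cons (v := Sum.inr 7) (by decide) (Walk.cons (v := Sum.inr 8) (by decide) (Walk.cons (v := Sum.inl 4) (by decide) (Walk.cons (v := Sum.inl 5) (by decide) (Walk.cons (v := Sum.inl 6) (by decide) (Walk.cons (v := Sum.inr 3) (by decide) (Walk.cons (v := Sum.inr 4) (by decide) (Walk.cons (v := Sum.inr 5) (by decide) (Walk.cons (v := Sum.inl 7) (by decide) (Walk.cons (v := Sum.inl 8) (by decide) (Walk.cons (v := Sum.inl 0) (by decide) (Walk.nil))))))))))))))))))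


lemma eN_inj : Function.Injective eN := fun a b h => by
  revert h; revert a b; decide

lemma adj_nbrs : ∀ u v : Vp, petersen92.Adj u v → eN v ∈ nbrsN (eN u) := by decide

set_option maxRecDepth 20000 in
set_option maxHeartbeats 2000000 in
lemma expand_eq : expandN 18 [[0]] =
    [[0, 9, 17, 16, 8, 7, 6, 12, 11, 10, 5, 4, 3, 15, 14, 13, 2, 1, 0],
     [0, 8, 16, 15, 14, 7, 6, 5, 10, 9, 17, 4, 3, 2, 13, 12, 11, 1, 0],
     [0, 9, 10, 11, 1, 2, 3, 15, 16, 17, 4, 5, 6, 12, 13, 14, 7, 8, 0],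
     [0, 1, 11, 12, 13, 2, 3, 4, 17, 9, 10, 5, 6, 7, 14, 15, 16, 8, 0],
     [0, 8, 7, 14, 13, 12, 6, 5, 4, 17, 16, 15, 3, 2, 1, 11, 10, 9, 0],
     [0, 1, 2, 13, 14, 15, 3, 4, 5, 10, 11, 12, 6, 7, 8, 16, 17, 9, 0]] := by decide

/-- the key search-completeness invariant -/
lemma inv_lemma (S : List Nat) (hlen : S.length = 19) (htl : S.tail.Nodup)
    (hhd : S.head? = some 0) :
    ∀ {u w : Vp} (q : petersen92.Walk u w) (L : List (List Nat)) (r : List Nat),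
      (q.support.tail.map eN).reverse ++ r = S → r.head? = some (eN u) → r ∈ L →
      S ∈ expandN q.length L := by
  intro u w q
  induction q with
  | nil =>
    intro L r h1 h2 h3
    simp only [Walk.support_nil, List.tail_cons, List.map_nil, List.reverse_nil,
      List.nil_append] at h1
    rw [Walk.length_nil]
    exact h1 ▸ h3
  | @cons u v w hadj p ih =>
    intro L r h1 h2 h3
    have hsup : (Walk.cons hadj p).support.tail = v :: p.support.tail := by
      rw [Walk.support_cons, List.tail_cons]; exact p.support_eq_cons
    rw [hsup] at h1
    have h1' : ((p.support.tail.map eN).reverse) ++ (eN v :: r) = S := by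
      rw [← h1, List.map_cons, List.reverse_cons, List.append_assoc, List.singleton_append]
    -- r is nonempty with head eN u
    obtain ⟨a, t, rfl⟩ : ∃ a t, r = a :: t := by
      cases r with
      | nil => simp at h2
      | cons a t => exact ⟨a, t, rfl⟩
    have ha : a = eN u := by simpa using h2
    subst ha
    -- the filter condition holds
    have hcond : (eN v ∉ (eN u :: t)) ∨ (eN v = 0 ∧ (eN u :: t).length = 18) := by
      cases hA : (p.support.tail.map eN).reverse with
      | nil =>
        right
        rw [hA, List.nil_append] at h1'
        constructor
        · have : S.head? = some (eN v) := by rw [← h1']; rfl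
          rw [hhd] at this
          exact (Option.some_inj.mp this).symm
        · have : S.length = (eN v :: eN u :: t).length := by rw [← h1']
          rw [hlen] at this
          simpa using this.symm
      | cons b A' =>
        left
        have hsuf : (eN v :: eN u :: t) <:+ S.tail := by
          rw [← h1', hA]
          exact ⟨A', by simp⟩
        have hnd : (eN v :: eN u :: t).Nodup := (hsuf.sublist.nodup htl)
        exact (List.nodup_cons.mp hnd).1
    -- step membership
    have hstep : (eN v :: eN u :: t) ∈ stepN (eN u :: t) := by
      show _ ∈ ((nbrsN (eN u)).filter _).map _
      refine List.mem_map.mpr ⟨eN v, List.mem_filter.mpr ⟨adj_nbrs u v hadj, ?_⟩, rfl⟩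
      rcases hcond with h | ⟨h1c, h2c⟩
      · simp [h]
      · simp [h1c, h2c]
    have h3' : (eN v :: eN u :: t) ∈ L.flatMap stepN :=
      List.mem_flatMap.mpr ⟨eN u :: t, h3, hstep⟩
    have := ih (L.flatMap stepN) (eN v :: eN u :: t) h1' rfl h3'
    rw [Walk.length_cons]
    exact this

lemma edges_eq_of_support_eq :
    ∀ {u v : Vp} (p : petersen92.Walk u v) {u' v' : Vp} (q : petersen92.Walk u' v'),
      p.support = q.support → p.edges = q.edges := by
  intro u v p
  induction p with
  | nil =>
    intro u' v' q h
    cases q with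
    | nil => simp
    | cons h' q' =>
      exfalso
      simp only [Walk.support_nil, Walk.support_cons] at h
      have := congrArg List.length h
      simp [Walk.length_support] at this
  | @cons u b v hadj p ih =>
    intro u' v' q hs
    cases q with
    | nil =>
      exfalso
      simp only [Walk.support_nil, Walk.support_cons] at hs
      have := congrArg List.length hs
      simp [Walk.length_support] at this
    | @cons _ b' _ hadj' q' =>
      simp only [Walk.support_cons] at hs
      obtain ⟨rfl, hs'⟩ : u = u' ∧ p.support = q'.support := by
        exact ⟨by injection hs, by injection hs⟩
      have hb : b = b' := by
        have h1 := p.support_eq_cons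
        have h2 := q'.support_eq_cons
        rw [h1, h2] at hs'
        injection hs'
      subst hb
      simp only [Walk.edges_cons]
      rw [ih q' hs']

lemma classify (q : petersen92.Walk (Sum.inl 0) (Sum.inl 0)) (hq : q.IsHamiltonianCycle) :
    q.support = s1 ∨ q.support = s2 ∨ q.support = s3 ∨
    q.support = s1.reverse ∨ q.support = s2.reverse ∨ q.support = s3.reverse := by
  have hcard : Fintype.card Vp = 18 := by simp
  have hlen : q.length = 18 := by rw [hq.length_eq, hcard]
  set S : List Nat := q.support.map eN with hSdef
  have hS0 : S = 0 :: (q.support.tail.map eN) := by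
    rw [hSdef, q.support_eq_cons]; rfl
  have hlen' : S.length = 19 := by
    rw [hSdef, List.length_map, Walk.length_support, hlen]
  have htl : S.tail.Nodup := by
    rw [hS0]
    exact (hq.isCycle.support_nodup).map eN_inj
  have hhd : S.head? = some 0 := by rw [hS0]; rfl
  have hrev : q.reverse.support.reverse = q.support := by
    rw [Walk.support_reverse, List.reverse_reverse]
  have hrs := q.reverse.support_eq_cons
  have key : (q.reverse.support.tail.map eN).reverse ++ [0] = S := by
    rw [hSdef, ← hrev, hrs]
    generalize q.reverse.support.tail = l
    simp [List.reverse_cons, eN]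
  have hmem : S ∈ expandN q.reverse.length [[0]] :=
    inv_lemma S hlen' htl hhd q.reverse [[0]] [0] key rfl (by simp)
  rw [Walk.length_reverse, hlen, expand_eq] at hmem
  have hinj : Function.Injective (List.map eN) := List.map_injective_iff.mpr eN_inj
  simp only [List.mem_cons, List.not_mem_nil, or_false] at hmem
  rcases hmem with h | h | h | h | h | h
  · exact Or.inl (hinj (by rw [← hSdef, h]; decide))
  · exact Or.inr (Or.inl (hinj (by rw [← hSdef, h]; decide)))
  · exact Or.inr (Or.inr (Or.inl (hinj (by rw [← hSdef, h]; decide))))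
  · exact Or.inr (Or.inr (Or.inr (Or.inr (Or.inl (hinj (by rw [← hSdef, h]; decide))))))
  · exact Or.inr (Or.inr (Or.inr (Or.inr (Or.inr (hinj (by rw [← hSdef, h]; decide))))))
  · exact Or.inr (Or.inr (Or.inr (Or.inl (hinj (by rw [← hSdef, h]; decide)))))

lemma hamW1 : W1.IsHamiltonianCycle := by
  rw [Walk.isHamiltonianCycle_iff_isCycle_and_support_count_tail_eq_one]
  refine ⟨⟨⟨⟨by decide⟩, by simp [W1]⟩, by decide⟩, by decide⟩

lemma hamW2 : W2.IsHamiltonianCycle := by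
  rw [Walk.isHamiltonianCycle_iff_isCycle_and_support_count_tail_eq_one]
  refine ⟨⟨⟨⟨by decide⟩, by simp [W2]⟩, by decide⟩, by decide⟩

lemma hamW3 : W3.IsHamiltonianCycle := by
  rw [Walk.isHamiltonianCycle_iff_isCycle_and_support_count_tail_eq_one]
  refine ⟨⟨⟨⟨by decide⟩, by simp [W3]⟩, by decide⟩, by decide⟩

lemma supW1 : W1.support = s1 := by decide
lemma supW2 : W2.support = s2 := by decide
lemma supW3 : W3.support = s3 := by decide

/-- `P(9,2)` has exactly three Hamilton cycles, where two Hamilton cycles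
are counted as the same if they have the same edge set. -/
theorem petersen92_three_hamiltonian_cycles :
    {s : Set (Sym2 (Fin 9 ⊕ Fin 9)) | ∃ (v : Fin 9 ⊕ Fin 9) (p : petersen92.Walk v v),
        p.IsHamiltonianCycle ∧ s = {e | e ∈ p.edges}}.ncard = 3 := by
  rw [Set.ncard_eq_three]
  refine ⟨{e | e ∈ W1.edges}, {e | e ∈ W2.edges}, {e | e ∈ W3.edges}, ?_, ?_, ?_, ?_⟩
  · intro h
    have h1 : (s(Sum.inl 0, Sum.inr 0) : Sym2 Vp) ∈ W1.edges := by decide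
    have h2 : (s(Sum.inl 0, Sum.inr 0) : Sym2 Vp) ∉ W2.edges := by decide
    have h1' : (s(Sum.inl 0, Sum.inr 0) : Sym2 Vp) ∈ {e | e ∈ W1.edges} := h1
    rw [h] at h1'
    exact h2 h1'
  · intro h
    have h1 : (s(Sum.inr 0, Sum.inr 8) : Sym2 Vp) ∈ W1.edges := by decide
    have h2 : (s(Sum.inr 0, Sum.inr 8) : Sym2 Vp) ∉ W3.edges := by decide
    have h1' : (s(Sum.inr 0, Sum.inr 8) : Sym2 Vp) ∈ {e | e ∈ W1.edges} := h1
    rw [h] at h1'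
    exact h2 h1'
  · intro h
    have h1 : (s(Sum.inl 8, Sum.inr 7) : Sym2 Vp) ∈ W2.edges := by decide
    have h2 : (s(Sum.inl 8, Sum.inr 7) : Sym2 Vp) ∉ W3.edges := by decide
    have h1' : (s(Sum.inl 8, Sum.inr 7) : Sym2 Vp) ∈ {e | e ∈ W2.edges} := h1
    rw [h] at h1'
    exact h2 h1'
  · ext s
    simp only [Set.mem_setOf_eq, Set.mem_insert_iff, Set.mem_singleton_iff]
    constructor
    · rintro ⟨v, p, hp, rfl⟩
      have h0 : Sum.inl 0 ∈ p.support := hp.mem_support _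
      set q := p.rotate _ h0 with hqdef
      have hq : q.IsHamiltonianCycle := by
        rw [Walk.isHamiltonianCycle_iff_isCycle_and_support_count_tail_eq_one] at hp ⊢
        exact ⟨hp.1.rotate h0, fun a =>
          ((@List.Perm.count_eq _ instBEqOfDecidableEq _ _ (p.support_rotate _ h0).perm a)).trans (hp.2 a)⟩
      have hpe : {e | e ∈ p.edges} = {e | e ∈ q.edges} := by
        ext x
        exact ((p.rotate_edges _ h0).perm.mem_iff).symm
      rw [hpe]
      rcases classify q hq with h | h | h | h | h | h
      · exact Or.inl (by rw [edges_eq_of_support_eq q W1 (h.trans supW1.symm)])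
      · exact Or.inr (Or.inl (by rw [edges_eq_of_support_eq q W2 (h.trans supW2.symm)]))
      · exact Or.inr (Or.inr (by rw [edges_eq_of_support_eq q W3 (h.trans supW3.symm)]))
      · refine Or.inl ?_
        have : q.edges = W1.reverse.edges :=
          edges_eq_of_support_eq q W1.reverse
            (by rw [Walk.support_reverse, supW1, h])
        rw [this, Walk.edges_reverse]
        ext x; simp
      · refine Or.inr (Or.inl ?_)
        have : q.edges = W2.reverse.edges :=
          edges_eq_of_support_eq q W2.reverse
            (by rw [Walk.support_reverse, supW2, h])
        rw [this, Walk.edges_reverse]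
        ext x; simp
      · refine Or.inr (Or.inr ?_)
        have : q.edges = W3.reverse.edges :=
          edges_eq_of_support_eq q W3.reverse
            (by rw [Walk.support_reverse, supW3, h])
        rw [this, Walk.edges_reverse]
        ext x; simp
    · rintro (rfl | rfl | rfl)
      · exact ⟨_, W1, hamW1, rfl⟩
      · exact ⟨_, W2, hamW2, rfl⟩
      · exact ⟨_, W3, hamW3, rfl⟩
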